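/- Let p ≡ 1 (mod 4) be prime, K = kp odd, gcd(h,K) = 1. Then τ_os(h,K) ≡ (p−1)/4 + τ_es(h,K) (mod 2), where τ_os counts odd μ ∈ (0,K) coprime to p that are nonresidues mod p with {hμ}_K odd, and τ_es counts the corresponding even μ. -/

import Mathlib

open scoped Classical

lemma isSquare_neg_iff' {F : Type*} [CommRing F] (h1 : IsSquare (-1 : F)) (x : F) :
    IsSquare (-x) ↔ IsSquare x :=
  ⟨fun h => by simpa using h1.mul h, fun h => by simpa using h1.mul h⟩

lemma card_nonsquares' (p : ℕ) [Fact p.Prime] (hp : p ≠ 2) :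
    (Finset.univ.filter fun a : ZMod p => ¬ IsSquare a).card = (p - 1) / 2 := by
  have hchar : ringChar (ZMod p) ≠ 2 := by
    rw [ZMod.ringChar_zmod_n]; exact hp
  set A := Finset.univ.filter fun a : ZMod p => ¬ IsSquare a with hA
  set B := Finset.univ.filter fun a : ZMod p => IsSquare a with hB
  have hcards : B.card + A.card = p := by
    have := Finset.card_filter_add_card_filter_not
      (s := (Finset.univ : Finset (ZMod p))) (p := fun a => IsSquare a)
    simpa [ZMod.card] using this
  have hsum : (0 : ℤ) = ∑ a : ZMod p, quadraticChar (ZMod p) a :=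
    (quadraticChar_sum_zero hchar).symm
  have h0B : (0 : ZMod p) ∈ B := by simp [hB]
  rw [← Finset.sum_filter_add_sum_filter_not Finset.univ (fun a : ZMod p => IsSquare a)] at hsum
  rw [← Finset.add_sum_erase B _ h0B] at hsum
  have hBpos : 0 < B.card := Finset.card_pos.mpr ⟨0, h0B⟩
  have hBsum : ∑ a ∈ B.erase 0, (quadraticChar (ZMod p) a : ℤ) = (B.card : ℤ) - 1 := by
    have hone : ∀ a ∈ B.erase 0, (quadraticChar (ZMod p) a : ℤ) = 1 := by
      intro a ha
      rcases Finset.mem_erase.mp ha with ⟨ha0, haB⟩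
      rw [(quadraticChar_one_iff_isSquare ha0).mpr (Finset.mem_filter.mp haB).2]
    rw [Finset.sum_congr rfl hone, Finset.sum_const, Finset.card_erase_of_mem h0B,
      nsmul_eq_mul, mul_one]
    omega
  have hAsum : ∑ a ∈ A, (quadraticChar (ZMod p) a : ℤ) = -(A.card : ℤ) := by
    have hmone : ∀ a ∈ A, (quadraticChar (ZMod p) a : ℤ) = -1 := by
      intro a ha
      rw [quadraticChar_neg_one_iff_not_isSquare.mpr (Finset.mem_filter.mp ha).2]
    rw [Finset.sum_congr rfl hmone, Finset.sum_const]
    simp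
  rw [hBsum, hAsum, MulChar.map_zero] at hsum
  omega

lemma mod_add_mod_eq' (h K μ : ℕ) (hμ0 : 0 < μ) (hμK : μ < K)
    (hcop : Nat.gcd h K = 1) : h * (K - μ) % K + h * μ % K = K := by
  have hK0 : 0 < K := lt_trans hμ0 hμK
  have hsum : (h * (K - μ) + h * μ) = h * K := by
    rw [← Nat.mul_add, Nat.sub_add_cancel hμK.le]
  have hmod : (h * (K - μ) % K + h * μ % K) % K = 0 := by
    rw [Nat.mod_add_mod, Nat.add_mod_mod, hsum, Nat.mul_mod_left]
  have hdvd : K ∣ h * (K - μ) % K + h * μ % K := Nat.dvd_of_mod_eq_zero hmod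
  have h1 : h * (K - μ) % K < K := Nat.mod_lt _ hK0
  have h2 : h * μ % K < K := Nat.mod_lt _ hK0
  have h2' : h * μ % K ≠ 0 := by
    intro h0
    have hd : K ∣ h * μ := Nat.dvd_of_mod_eq_zero h0
    have hd2 : K ∣ μ := Nat.Coprime.dvd_of_dvd_mul_left (Nat.coprime_comm.mp hcop) hd
    exact absurd (Nat.le_of_dvd hμ0 hd2) (by omega)
  obtain ⟨c, hc⟩ := hdvd
  have hc1 : c = 1 := by
    rcases Nat.lt_or_ge c 2 with hlt | hge
    · interval_cases c <;> omega
    · have := Nat.mul_le_mul_left K hge; omega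
  rw [hc1, Nat.mul_one] at hc
  omega

lemma card_Ioo_nonsquares' (p k : ℕ) [Fact p.Prime] :
    ((Finset.Ioo 0 (k * p)).filter fun μ : ℕ => ¬ IsSquare ((μ : ℕ) : ZMod p)).card
      = k * (Finset.univ.filter fun a : ZMod p => ¬ IsSquare a).card := by
  have hp0 : 0 < p := (Fact.out : p.Prime).pos
  have key : ((Finset.Ioo 0 (k * p)).filter fun μ : ℕ => ¬ IsSquare ((μ : ℕ) : ZMod p)).card
      = (Finset.range k ×ˢ (Finset.univ.filter fun a : ZMod p => ¬ IsSquare a)).card := by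
    apply Finset.card_nbij' (i := fun μ => (μ / p, (μ : ZMod p)))
        (j := fun x => x.1 * p + (x.2).val)
    · intro μ hμ
      rcases Finset.mem_filter.mp hμ with ⟨hIoo, hns⟩
      rcases Finset.mem_Ioo.mp hIoo with ⟨h0, hlt⟩
      refine Finset.mem_product.mpr
        ⟨Finset.mem_range.mpr ?_, Finset.mem_filter.mpr ⟨Finset.mem_univ _, hns⟩⟩
      exact Nat.div_lt_of_lt_mul (by rwa [Nat.mul_comm] at hlt)
    · rintro ⟨j, a⟩ hx
      rcases Finset.mem_product.mp hx with ⟨hj, ha⟩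
      have hj' : j < k := Finset.mem_range.mp hj
      have hns : ¬ IsSquare a := (Finset.mem_filter.mp ha).2
      have ha0 : a ≠ 0 := fun h => hns (h ▸ IsSquare.zero)
      have haval : 0 < a.val := Nat.pos_of_ne_zero
        (fun h => ha0 ((ZMod.val_eq_zero a).mp h))
      have havallt : a.val < p := ZMod.val_lt a
      refine Finset.mem_filter.mpr ⟨Finset.mem_Ioo.mpr ⟨?_, ?_⟩, ?_⟩
      · show 0 < j * p + a.val
        omega
      · show j * p + a.val < k * p
        calc j * p + a.val < j * p + p := by omega
          _ = (j + 1) * p := by ring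
          _ ≤ k * p := Nat.mul_le_mul_right p (by omega)
      · have hcast : ((j * p + a.val : ℕ) : ZMod p) = a := by
          push_cast [ZMod.natCast_self, ZMod.natCast_val, ZMod.cast_id]
          ring
        show ¬ IsSquare ((j * p + a.val : ℕ) : ZMod p)
        rw [hcast]; exact hns
    · intro μ hμ
      simp only
      rw [ZMod.val_natCast]
      exact Nat.div_add_mod' μ p
    · rintro ⟨j, a⟩ hx
      have havallt : a.val < p := ZMod.val_lt a
      simp only [Prod.mk.injEq]
      constructor
      · rw [Nat.add_comm, Nat.add_mul_div_right _ _ hp0, Nat.div_eq_of_lt havallt]; omega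
      · push_cast [ZMod.natCast_self, ZMod.natCast_val, ZMod.cast_id]
        ring
  rw [key, Finset.card_product, Finset.card_range]


/-- `τ_os(h,K)`: odd `μ ∈ (0,K)`, coprime to `p`, quadratic nonresidues mod `p`,
with `{hμ}_K` odd. -/
noncomputable def tauOS (p K h : ℕ) : ℕ :=
  ((Finset.Ioo 0 K).filter (fun μ =>
    ¬ p ∣ μ ∧ Odd μ ∧ ¬ IsSquare (μ : ZMod p) ∧ Odd (h * μ % K))).card

/-- `τ_es(h,K)`: even `μ ∈ (0,K)`, coprime to `p`, quadratic nonresidues mod `p`,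
with `{hμ}_K` odd. -/
noncomputable def tauES (p K h : ℕ) : ℕ :=
  ((Finset.Ioo 0 K).filter (fun μ =>
    ¬ p ∣ μ ∧ 2 ∣ μ ∧ ¬ IsSquare (μ : ZMod p) ∧ Odd (h * μ % K))).card

theorem tauOS_mod_two (p k h : ℕ) [Fact p.Prime] (h4 : p % 4 = 1)
    (hK : Odd (k * p)) (hcop : Nat.gcd h (k * p) = 1) :
    tauOS p (k * p) h % 2 = ((p - 1) / 4 + tauES p (k * p) h) % 2 := by
  have hp : p.Prime := Fact.out
  have hp2 : 2 ≤ p := hp.two_le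
  set K := k * p with hKdef
  have hKpos : 0 < K := hK.pos
  have hKodd : K % 2 = 1 := Nat.odd_iff.mp hK
  have hneg1 : IsSquare (-1 : ZMod p) := ZMod.exists_sq_eq_neg_one_iff.mpr (by omega)
  have hred : ∀ μ : ℕ, ¬ IsSquare ((μ : ℕ) : ZMod p) → ¬ p ∣ μ := fun μ hns hdvd =>
    hns (by rw [(ZMod.natCast_eq_zero_iff μ p).mpr hdvd]; exact IsSquare.zero)
  set N := (Finset.Ioo 0 K).filter (fun μ : ℕ => ¬ IsSquare ((μ : ℕ) : ZMod p)) with hN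
  set S := N.filter (fun μ => Odd (h * μ % K)) with hS
  set S' := N.filter (fun μ => ¬ Odd (h * μ % K)) with hS'
  -- Step 1: express tauOS, tauES
  have hOS : tauOS p K h = (S.filter (fun μ => Odd μ)).card := by
    rw [hS, hN, Finset.filter_filter, Finset.filter_filter]
    unfold tauOS
    apply congrArg
    ext μ
    simp only [Finset.mem_filter]
    have := hred μ
    tauto
  have hES : tauES p K h = (S.filter (fun μ => ¬ Odd μ)).card := by
    rw [hS, hN, Finset.filter_filter, Finset.filter_filter]
    unfold tauES
    apply congrArg
    ext μ
    simp only [Finset.mem_filter]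
    have hr := hred μ
    have h2dvd : 2 ∣ μ ↔ ¬ Odd μ := by rw [Nat.odd_iff]; omega
    tauto
  -- Step 2: split by parity of μ
  have hsplit : tauOS p K h + tauES p K h = S.card := by
    rw [hOS, hES]
    exact Finset.card_filter_add_card_filter_not _
  -- Step 3: involution μ ↦ K - μ
  have hmem : ∀ μ ∈ N, K - μ ∈ N ∧ h * (K - μ) % K + h * μ % K = K := by
    intro μ hμ
    rcases Finset.mem_filter.mp hμ with ⟨hIoo, hns⟩
    rcases Finset.mem_Ioo.mp hIoo with ⟨h0, hlt⟩
    have hcast : (((K - μ : ℕ) : ZMod p)) = -((μ : ℕ) : ZMod p) := by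
      have hK0 : ((K : ℕ) : ZMod p) = 0 := by
        rw [hKdef]; push_cast [ZMod.natCast_self]; ring
      rw [Nat.cast_sub hlt.le, hK0, zero_sub]
    refine ⟨Finset.mem_filter.mpr ⟨Finset.mem_Ioo.mpr ⟨by omega, by omega⟩, ?_⟩,
      mod_add_mod_eq' h K μ h0 hlt hcop⟩
    rw [hcast, isSquare_neg_iff' hneg1]
    exact hns
  have hSS' : S.card = S'.card := by
    apply Finset.card_nbij' (i := fun μ => K - μ) (j := fun μ => K - μ)
    · intro μ hμ
      rcases Finset.mem_filter.mp hμ with ⟨hμN, hodd⟩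
      rcases hmem μ hμN with ⟨hN', hkey⟩
      refine Finset.mem_filter.mpr ⟨hN', ?_⟩
      have h1 := Nat.odd_iff.mp hodd
      rw [Nat.odd_iff]
      beta_reduce
      omega
    · intro μ hμ
      rcases Finset.mem_filter.mp hμ with ⟨hμN, hodd⟩
      rcases hmem μ hμN with ⟨hN', hkey⟩
      refine Finset.mem_filter.mpr ⟨hN', ?_⟩
      rw [Nat.odd_iff] at hodd ⊢
      have hr : 0 < h * μ % K := by
        by_contra h0
        rcases Finset.mem_Ioo.mp (Finset.mem_filter.mp hμN).1 with ⟨ha, hb⟩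
        have hd : K ∣ h * μ := Nat.dvd_of_mod_eq_zero (by omega)
        have hd2 : K ∣ μ := Nat.Coprime.dvd_of_dvd_mul_left (Nat.coprime_comm.mp hcop) hd
        exact absurd (Nat.le_of_dvd ha hd2) (by omega)
      beta_reduce
      omega
    · intro μ hμ
      rcases Finset.mem_Ioo.mp (Finset.mem_filter.mp (Finset.mem_filter.mp hμ).1).1 with ⟨ha, hb⟩
      beta_reduce
      omega
    · intro μ hμ
      rcases Finset.mem_Ioo.mp (Finset.mem_filter.mp (Finset.mem_filter.mp hμ).1).1 with ⟨ha, hb⟩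
      beta_reduce
      omega
  -- Step 4: total count
  have hNsplit : S.card + S'.card = N.card :=
    Finset.card_filter_add_card_filter_not _
  have hNcard : N.card = k * ((p - 1) / 2) := by
    rw [hN, hKdef, card_Ioo_nonsquares' p k, card_nonsquares' p (by omega)]
  -- Step 5: arithmetic
  have hq : (p - 1) / 2 = 2 * ((p - 1) / 4) := by omega
  have hS2 : 2 * S.card = 2 * (k * ((p - 1) / 4)) := by
    rw [hq] at hNcard
    calc 2 * S.card = S.card + S'.card := by omega
      _ = k * (2 * ((p - 1) / 4)) := by rw [hNsplit, hNcard]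
      _ = 2 * (k * ((p - 1) / 4)) := by ring
  have hScard : S.card = k * ((p - 1) / 4) := by omega
  have hkodd : k % 2 = 1 := Nat.odd_iff.mp (Nat.odd_mul.mp hK).1
  have hkq : (k * ((p - 1) / 4)) % 2 = ((p - 1) / 4) % 2 := by
    rw [Nat.mul_mod, hkodd, one_mul]
    omega
  omega
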